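/- arXiv:1703.09331 — 10 statements merged into one kernel-verified Lean document; each statement's English description precedes it below -/
import Mathlib

section
/- For any subset S of ℕ^n and any k ∈ ℕ, the set of elements s ∈ S such that the down-set {u ∈ S : u ≤ s} (coordinatewise order) has cardinality at most k+1 is finite. -/
private def stmt_0_inst : IsWellOrder ℕ (· < ·) := inferInstance

theorem stmt_0 (n k : ℕ) (S : Set (Fin n → ℕ)) :
    {s ∈ S | ({u ∈ S | u ≤ s}).ncard ≤ k + 1}.Finite := by
  by_contra h
  replace h : {s ∈ S | ({u ∈ S | u ≤ s}).ncard ≤ k + 1}.Infinite := h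
  obtain ⟨f, hf⟩ := h.natEmbedding
  have hmem : ∀ m, (f m : Fin n → ℕ) ∈ {s ∈ S | ({u ∈ S | u ≤ s}).ncard ≤ k + 1} :=
    fun m => (f m).2
  have hpwo : (Set.univ : Set (Fin n → ℕ)).IsPWO :=
    Set.isPWO_of_wellQuasiOrderedLE _
  obtain ⟨g, hg⟩ := hpwo.exists_monotone_subseq
    (f := fun m => (f m : Fin n → ℕ)) (fun m => Set.mem_univ _)
  set s : Fin n → ℕ := (f (g (k + 1)) : Fin n → ℕ) with hs
  have hsub : (fun m => (f (g m) : Fin n → ℕ)) '' (Set.Iic (k + 1)) ⊆ {u ∈ S | u ≤ s} := by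
    rintro x ⟨m, hm, rfl⟩
    exact ⟨(hmem (g m)).1, hg hm⟩
  have hinj : Set.InjOn (fun m => (f (g m) : Fin n → ℕ)) (Set.Iic (k + 1)) := by
    intro a _ b _ hab
    exact g.injective (hf (Subtype.coe_injective hab))
  have hfin : {u ∈ S | u ≤ s}.Finite := (Set.finite_Iic s).subset (fun u hu => hu.2)
  have hIic : (Set.Iic (k + 1) : Set ℕ) = ↑(Finset.Iic (k + 1)) := by simp
  have hcard : (k + 2 : ℕ) ≤ {u ∈ S | u ≤ s}.ncard := by
    have h1 : ((fun m => (f (g m) : Fin n → ℕ)) '' (Set.Iic (k + 1))).ncard = k + 2 := by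
      rw [Set.ncard_image_of_injOn hinj, hIic, Set.ncard_coe_finset, Nat.card_Iic]
    calc (k + 2 : ℕ) = _ := h1.symm
      _ ≤ _ := Set.ncard_le_ncard hsub hfin
  have h2 := (hmem (g (k + 1))).2
  rw [← hs] at h2
  omega
end

section
/- If A ⊆ ℤ^n and the neighbor complex Nb(A) has finite dimension d (every simplex has at most d+1 vertices), then Nb(A) is locally finite: every a ∈ A has only finitely many A-neighbors. -/
/-- The coordinatewise supremum of `B ⊆ ℝ^n`, valued in `(ℝ ∪ {±∞})^n`. -/
noncomputable def vsup {n : ℕ} (B : Set (Fin n → ℝ)) : Fin n → EReal :=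
  fun i => ⨆ b ∈ B, ((b i : ℝ) : EReal)

/-- `B` is a simplex of the neighbor complex of `A`. -/
def Nb {n : ℕ} (A B : Set (Fin n → ℝ)) : Prop :=
  B ⊆ A ∧ ¬ ∃ a ∈ A, ∀ i, ((a i : ℝ) : EReal) < vsup B i

/-- Main theorem: if `A ⊆ ℤ^n` and `Nb A` has finite dimension `d`
(every simplex has at most `d+1` vertices), then every `a ∈ A` has
only finitely many `A`-neighbors. -/
theorem stmt_5 (n d : ℕ) (A : Set (Fin n → ℝ))
    (hint : ∀ a ∈ A, ∀ i, ∃ m : ℤ, a i = (m : ℝ))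
    (hdim : ∀ B, Nb A B → B.Finite ∧ B.ncard ≤ d + 1) :
    ∀ a ∈ A, {b ∈ A | Nb A {a, b}}.Finite := by
  intro a ha
  by_contra hfin
  have hinf : {b ∈ A | Nb A {a, b}}.Infinite := hfin
  let e := hinf.natEmbedding
  let b : ℕ → (Fin n → ℝ) := fun k => (e k : Fin n → ℝ)
  have hbinj : Function.Injective b := fun i j h => e.injective (Subtype.ext h)
  have hbN : ∀ k, b k ∈ A ∧ Nb A {a, b k} := fun k => (e k).2
  have hbA : ∀ k, b k ∈ A := fun k => (hbN k).1
  -- natural-number valued coordinatewise sups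
  let F : ℕ → Fin n → ℕ := fun k i => (⌊max (a i) (b k i)⌋ - ⌊a i⌋).toNat
  have hpwo : (Set.univ : Set (Fin n → ℕ)).IsPWO :=
    Set.isPWO_of_wellQuasiOrderedLE Set.univ
  obtain ⟨g, hg⟩ := hpwo.exists_monotone_subseq (f := F)
    (fun _ => Set.mem_univ _)
  have hmax : ∀ ⦃k m : ℕ⦄, k ≤ m → ∀ i, max (a i) (b (g k) i) ≤ max (a i) (b (g m) i) := by
    intro k m hkm i
    obtain ⟨m1, hm1⟩ := hint a ha i
    obtain ⟨mk, hmk⟩ := hint _ (hbA (g k)) i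
    obtain ⟨mm, hmm⟩ := hint _ (hbA (g m)) i
    have h1 : F (g k) i ≤ F (g m) i := hg hkm i
    simp only [F, hm1, hmk, hmm, ← Int.cast_max, Int.floor_intCast] at h1
    rw [hm1, hmk, hmm, ← Int.cast_max, ← Int.cast_max, Int.cast_le]
    omega
  -- build a big simplex
  set T : Finset (Fin n → ℝ) := (Finset.range (d + 2)).image (fun k => b (g k)) with hT
  set B : Set (Fin n → ℝ) := insert a (T : Set (Fin n → ℝ)) with hB
  have hNbB : Nb A B := by
    constructor
    · intro x hx
      rcases hx with rfl | hx
      · exact ha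
      · obtain ⟨k, -, rfl⟩ := Finset.mem_image.1 hx
        exact hbA _
    · rintro ⟨a', ha', hlt⟩
      refine (hbN (g (d + 1))).2.2 ⟨a', ha', fun i => lt_of_lt_of_le (hlt i) ?_⟩
      -- vsup B i ≤ vsup {a, b (g (d+1))} i
      have hA : ((a i : ℝ) : EReal) ≤ vsup {a, b (g (d + 1))} i :=
        le_biSup (fun x : Fin n → ℝ => ((x i : ℝ) : EReal))
          (Set.mem_insert a {b (g (d + 1))})
      have hBtop : ((b (g (d + 1)) i : ℝ) : EReal) ≤ vsup {a, b (g (d + 1))} i :=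
        le_biSup (fun x : Fin n → ℝ => ((x i : ℝ) : EReal))
          (Set.mem_insert_of_mem a (Set.mem_singleton _))
      refine iSup₂_le fun x hx => ?_
      rcases hx with rfl | hx
      · exact hA
      · obtain ⟨k, hk, rfl⟩ := Finset.mem_image.1 hx
        have hk' : k ≤ d + 1 := by
          have := Finset.mem_range.1 hk; omega
        have h2 : b (g k) i ≤ max (a i) (b (g (d + 1)) i) :=
          le_trans (le_max_right _ _) (hmax hk' i)
        calc ((b (g k) i : ℝ) : EReal) ≤ ((max (a i) (b (g (d + 1)) i) : ℝ) : EReal) := by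
              exact_mod_cast h2
          _ ≤ vsup {a, b (g (d + 1))} i := by
              rcases max_cases (a i) (b (g (d + 1)) i) with ⟨h, -⟩ | ⟨h, -⟩ <;> rw [h]
              · exact hA
              · exact hBtop
  obtain ⟨hBfin, hBcard⟩ := hdim B hNbB
  have hTcard : T.card = d + 2 := by
    have hinj2 : Function.Injective (fun k => b (g k)) := fun i j h => g.injective (hbinj h)
    rw [hT, Finset.card_image_of_injective _ hinj2, Finset.card_range]
  have hsub : (T : Set (Fin n → ℝ)) ⊆ B := Set.subset_insert _ _
  have : (T : Set (Fin n → ℝ)).ncard ≤ B.ncard := Set.ncard_le_ncard hsub hBfin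
  rw [Set.ncard_coe_finset, hTcard] at this
  omega
end

section
/- Fix an orthant P of ℝ^n (the set of points whose i-th coordinate has sign ε_i ∈ {+,−} for a fixed sign vector ε), ordered by a ≤_P b iff b − a ∈ P. If A ⊆ ℤ^n, Nb(A) has dimension d, 0 ∈ A, and b ∈ A ∩ P is an A-neighbor of 0, then the down-set {u ∈ A ∩ P : u ≤_P b} has cardinality at most d+1. -/
theorem stmt_6 (n d : ℕ) (A : Set (Fin n → ℝ))
    (ε : Fin n → ℝ) (hε : ∀ i, ε i = 1 ∨ ε i = -1)
    (hint : ∀ a ∈ A, ∀ i, ∃ m : ℤ, a i = (m : ℝ))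
    (hdim : (∀ B, Nb A B → B.Finite ∧ B.ncard ≤ d + 1) ∧
            (∃ B, Nb A B ∧ B.Finite ∧ B.ncard = d + 1))
    (h0 : (0 : Fin n → ℝ) ∈ A)
    (b : Fin n → ℝ) (hb : b ∈ A) (hbP : ∀ i, 0 ≤ ε i * b i)
    (hnbr : Nb A {0, b}) :
    ({u ∈ A | (∀ i, 0 ≤ ε i * u i) ∧ (∀ i, 0 ≤ ε i * (b i - u i))}).Finite ∧
    ({u ∈ A | (∀ i, 0 ≤ ε i * u i) ∧ (∀ i, 0 ≤ ε i * (b i - u i))}).ncard ≤ d + 1 := by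
  set S : Set (Fin n → ℝ) :=
    {u ∈ A | (∀ i, 0 ≤ ε i * u i) ∧ (∀ i, 0 ≤ ε i * (b i - u i))} with hS
  have hbound : ∀ i, vsup S i ≤ vsup ({0, b} : Set (Fin n → ℝ)) i := by
    intro i
    apply iSup₂_le
    intro u hu
    have hmax : u i ≤ max 0 (b i) := by
      rcases hε i with h1 | h1
      · have := hu.2.2 i
        rw [h1, one_mul] at this
        have : u i ≤ b i := by linarith
        exact this.trans (le_max_right _ _)
      · have := hu.2.1 i
        rw [h1] at this
        have : u i ≤ 0 := by linarith
        exact this.trans (le_max_left _ _)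
    calc ((u i : ℝ) : EReal) ≤ ((max 0 (b i) : ℝ) : EReal) := by
          exact_mod_cast hmax
      _ ≤ vsup ({0, b} : Set (Fin n → ℝ)) i := by
          rcases le_total 0 (b i) with h | h
          · rw [max_eq_right h]
            exact le_iSup₂ (f := fun v (_ : v ∈ ({0, b} : Set (Fin n → ℝ))) =>
              ((v i : ℝ) : EReal)) b (by simp)
          · rw [max_eq_left h]
            exact le_iSup₂ (f := fun v (_ : v ∈ ({0, b} : Set (Fin n → ℝ))) =>
              ((v i : ℝ) : EReal)) 0 (by simp)
  have hNbS : Nb A S := by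
    refine ⟨fun u hu => hu.1, ?_⟩
    rintro ⟨a, ha, hlt⟩
    exact hnbr.2 ⟨a, ha, fun i => lt_of_lt_of_le (hlt i) (hbound i)⟩
  exact hdim.1 S hNbS
end

section
/- If A ⊆ ℤ^n, Nb(A) has dimension d, and a ∈ A, then for each orthant P of ℝ^n, a has only finitely many A-neighbors b with b − a ∈ P. -/
theorem stmt_7 (n d : ℕ) (A : Set (Fin n → ℝ))
    (ε : Fin n → ℝ) (hε : ∀ i, ε i = 1 ∨ ε i = -1)
    (hint : ∀ a ∈ A, ∀ i, ∃ m : ℤ, a i = (m : ℝ))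
    (hdim : (∀ B, Nb A B → B.Finite ∧ B.ncard ≤ d + 1) ∧
            (∃ B, Nb A B ∧ B.Finite ∧ B.ncard = d + 1))
    (a : Fin n → ℝ) (ha : a ∈ A) :
    {b ∈ A | Nb A {a, b} ∧ ∀ i, 0 ≤ ε i * (b i - a i)}.Finite := by
  set S := {b ∈ A | Nb A {a, b} ∧ ∀ i, 0 ≤ ε i * (b i - a i)} with hSdef
  by_contra hfin
  have hinf : S.Infinite := hfin
  -- every element of S gives a point of ℕ^n via the twisted coordinates
  have hintS : ∀ b ∈ S, ∀ i, ∃ z : ℤ, ε i * (b i - a i) = (z : ℝ) := by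
    intro b hb i
    obtain ⟨mb, hmb⟩ := hint b hb.1 i
    obtain ⟨ma, hma⟩ := hint a ha i
    rcases hε i with h | h
    · exact ⟨mb - ma, by rw [h, hmb, hma]; push_cast; ring⟩
    · exact ⟨ma - mb, by rw [h, hmb, hma]; push_cast; ring⟩
  set ψ : (Fin n → ℝ) → (Fin n → ℕ) := fun b i => (⌊ε i * (b i - a i)⌋).toNat with hψdef
  have hψval : ∀ b ∈ S, ∀ i, ((ψ b i : ℝ)) = ε i * (b i - a i) := by
    intro b hb i
    obtain ⟨z, hz⟩ := hintS b hb i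
    have h0 : 0 ≤ z := by
      have h1 := hb.2.2 i
      rw [hz] at h1; exact_mod_cast h1
    show ((⌊ε i * (b i - a i)⌋).toNat : ℝ) = ε i * (b i - a i)
    rw [hz, Int.floor_intCast]
    exact_mod_cast congrArg (fun z : ℤ => (z : ℝ)) (Int.toNat_of_nonneg h0)
  -- an infinite sequence in S, and a monotone subsequence via Dickson's lemma
  let e := Set.Infinite.natEmbedding S hinf
  let f : ℕ → (Fin n → ℝ) := fun k => (e k : Fin n → ℝ)
  have hfS : ∀ k, f k ∈ S := fun k => (e k).2
  have hfinj : Function.Injective f := fun j k h => e.injective (Subtype.ext h)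
  have hpwo : Set.IsPWO (Set.univ : Set (Fin n → ℕ)) :=
    Set.isPWO_of_wellQuasiOrderedLE _
  obtain ⟨g, hg⟩ := hpwo.exists_monotone_subseq (f := ψ ∘ f) (fun _ => Set.mem_univ _)
  set b : ℕ → (Fin n → ℝ) := f ∘ g with hbdef
  have hbS : ∀ k, b k ∈ S := fun k => hfS _
  have hbinj : Function.Injective b := hfinj.comp g.injective
  have hmono : ∀ j k : ℕ, j ≤ k → ∀ i, ε i * (b j i - a i) ≤ ε i * (b k i - a i) := by
    intro j k hjk i
    have h1 := hg hjk i
    rw [← hψval _ (hbS j) i, ← hψval _ (hbS k) i]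
    exact_mod_cast h1
  -- the chain of length d+2 together with a forms a simplex of Nb A
  set R : Set (Fin n → ℝ) := Set.range (fun j : Fin (d + 2) => b (j : ℕ)) with hRdef
  have hRsub : R ⊆ S := by rintro x ⟨j, rfl⟩; exact hbS _
  have hBA : insert a R ⊆ A := by
    intro x hx
    rcases Set.mem_insert_iff.mp hx with rfl | hx
    · exact ha
    · exact (hRsub hx).1
  have hNb : Nb A (insert a R) := by
    refine ⟨hBA, ?_⟩
    rintro ⟨c, hcA, hc⟩
    have htop := hbS (d + 1)
    refine htop.2.1.2 ⟨c, hcA, fun i => ?_⟩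
    refine lt_of_lt_of_le (hc i) ?_
    show vsup (insert a R) i ≤ vsup {a, b (d + 1)} i
    simp only [vsup]
    have hmem_a : a ∈ ({a, b (d + 1)} : Set (Fin n → ℝ)) := Set.mem_insert _ _
    have hmem_t : b (d + 1) ∈ ({a, b (d + 1)} : Set (Fin n → ℝ)) :=
      Set.mem_insert_of_mem _ rfl
    refine iSup₂_le fun x hx => ?_
    rcases Set.mem_insert_iff.mp hx with rfl | hx
    · exact le_biSup (fun x => ((x i : ℝ) : EReal)) hmem_a
    · obtain ⟨j, rfl⟩ := hx
      rcases hε i with h1 | h1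
      · have h2 : b (j : ℕ) i ≤ b (d + 1) i := by
          have h3 := hmono (j : ℕ) (d + 1) (Nat.lt_succ_iff.mp j.isLt) i
          rw [h1] at h3; linarith
        exact le_trans (by exact_mod_cast h2)
          (le_biSup (fun x => ((x i : ℝ) : EReal)) hmem_t)
      · have h2 : b (j : ℕ) i ≤ a i := by
          have h3 := (hbS (j : ℕ)).2.2 i
          rw [h1] at h3; linarith
        exact le_trans (by exact_mod_cast h2)
          (le_biSup (fun x => ((x i : ℝ) : EReal)) hmem_a)
  -- cardinality contradiction
  have hfinB : (insert a R).Finite := (hdim.1 _ hNb).1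
  have hcard : (insert a R).ncard ≤ d + 1 := (hdim.1 _ hNb).2
  have hinjFin : Function.Injective (fun j : Fin (d + 2) => b (j : ℕ)) := by
    intro j k hjk
    exact Fin.val_injective (hbinj hjk)
  have hRcard : R.ncard = d + 2 := by
    rw [hRdef, ← Set.image_univ, Set.ncard_image_of_injective _ hinjFin, Set.ncard_univ]
    simp
  have hle : R.ncard ≤ (insert a R).ncard :=
    Set.ncard_le_ncard (Set.subset_insert a R) hfinB
  omega
end

section
/- Let a₀ = (0,0,1) and a_i = (i, 1/i, (i−1)/i) for i ≥ 1, and A = {a₀, a₁, a₂, …} ⊆ ℝ³. Then for every i ≥ 1, {a₀, a_i} ∈ Nb(A); hence a₀ has infinitely many A-neighbors and Nb(A) is not locally finite. -/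
/-- `a 0 = (0,0,1)` and `a i = (i, 1/i, (i-1)/i)` for `i ≥ 1`. -/
noncomputable def seqA : ℕ → (Fin 3 → ℝ) := fun i =>
  if i = 0 then ![0, 0, 1] else ![(i : ℝ), 1 / (i : ℝ), ((i : ℝ) - 1) / (i : ℝ)]


lemma vsup_pair {n : ℕ} (x y : Fin n → ℝ) (j : Fin n) :
    vsup {x, y} j = ((max (x j) (y j) : ℝ) : EReal) := by
  show (⨆ b ∈ ({x, y} : Set (Fin n → ℝ)), ((b j : ℝ) : EReal)) = _
  rw [iSup_pair]
  rcases le_total (x j) (y j) with h | h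
  · rw [max_eq_right h, sup_eq_right.mpr (by exact_mod_cast h)]
  · rw [max_eq_left h, sup_eq_left.mpr (by exact_mod_cast h)]

lemma seqA_pos (i : ℕ) (hi : i ≠ 0) :
    seqA i = ![(i : ℝ), 1 / (i : ℝ), ((i : ℝ) - 1) / (i : ℝ)] := by
  simp [seqA, hi]

lemma nb_main (i : ℕ) (hi : 1 ≤ i) : Nb (Set.range seqA) {seqA 0, seqA i} := by
  constructor
  · rintro b (rfl | rfl) <;> exact Set.mem_range_self _
  · rintro ⟨a, ⟨k, rfl⟩, h⟩
    have hi' : (i : ℝ) ≥ 1 := by exact_mod_cast hi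
    have hipos : (0:ℝ) < i := by linarith
    rcases Nat.eq_zero_or_pos k with hk | hk
    · have h2 := h 2
      rw [vsup_pair, EReal.coe_lt_coe_iff] at h2
      subst hk
      have hs0 : seqA 0 2 = 1 := by simp [seqA]
      have hsi : seqA i 2 = ((i:ℝ) - 1) / i := by
        rw [seqA_pos i (by omega)]; simp
      rw [hs0, hsi] at h2
      have : ((i:ℝ) - 1) / i < 1 := by
        rw [div_lt_one hipos]; linarith
      rcases lt_max_iff.mp h2 with h | h <;> linarith
    · have hk' : (k : ℝ) ≥ 1 := by exact_mod_cast hk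
      have hkpos : (0:ℝ) < k := by linarith
      have h0 := h 0
      have h1 := h 1
      rw [vsup_pair, EReal.coe_lt_coe_iff] at h0 h1
      have hs00 : seqA 0 0 = 0 := by simp [seqA]
      have hs01 : seqA 0 1 = 0 := by simp [seqA]
      have hsk : seqA k = ![(k : ℝ), 1 / (k : ℝ), ((k : ℝ) - 1) / (k : ℝ)] :=
        seqA_pos k (by omega)
      have hsi : seqA i = ![(i : ℝ), 1 / (i : ℝ), ((i : ℝ) - 1) / (i : ℝ)] :=
        seqA_pos i (by omega)
      rw [hsk, hsi] at h0 h1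
      rw [hs00] at h0
      rw [hs01] at h1
      simp [lt_max_iff] at h0 h1
      have hik : (i:ℝ) < k :=
        (inv_lt_inv₀ hkpos hipos).mp h1
      have : (k:ℝ) < i := by exact_mod_cast h0
      linarith

theorem stmt_10 :
    (∀ i : ℕ, 1 ≤ i → Nb (Set.range seqA) {seqA 0, seqA i}) ∧
    {b ∈ Set.range seqA | Nb (Set.range seqA) {seqA 0, b}}.Infinite := by
  refine ⟨nb_main, ?_⟩
  have hsub : seqA '' {i | 1 ≤ i} ⊆
      {b ∈ Set.range seqA | Nb (Set.range seqA) {seqA 0, b}} := by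
    rintro b ⟨i, hi, rfl⟩
    exact ⟨Set.mem_range_self _, nb_main i hi⟩
  refine Set.Infinite.mono hsub ?_
  have hinj : Set.InjOn seqA {i | 1 ≤ i} := by
    intro a ha b hb hab
    have : seqA a 0 = seqA b 0 := by rw [hab]
    rw [seqA_pos a (Nat.one_le_iff_ne_zero.mp ha), seqA_pos b (Nat.one_le_iff_ne_zero.mp hb)] at this
    simp at this
    exact_mod_cast this
  exact Set.Infinite.image hinj (Set.infinite_of_not_bddAbove (by
    intro ⟨m, hm⟩
    have := hm (Set.mem_setOf.mpr (Nat.le_add_left 1 m))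
    omega))
end

section
/- Let a₀ = (0,0,1) and a_i = (i, 1/i, (i−1)/i) for i ≥ 1, and A = {a₀, a₁, a₂, …} ⊆ ℝ³. Then no 4-element subset of A belongs to Nb(A); hence dim Nb(A) ≤ 2. -/
lemma seqA_ne (n : ℕ) (hn : n ≠ 0) :
    seqA n = ![(n : ℝ), 1 / (n : ℝ), ((n : ℝ) - 1) / (n : ℝ)] := by
  simp [seqA, hn]

lemma le_vsup {B : Set (Fin 3 → ℝ)} {b : Fin 3 → ℝ} (hb : b ∈ B) (i : Fin 3) :
    ((b i : ℝ) : EReal) ≤ vsup B i :=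
  le_biSup (fun b : Fin 3 → ℝ => ((b i : ℝ) : EReal)) hb

theorem stmt_11 :
    ∀ B ⊆ Set.range seqA, B.Finite → B.ncard = 4 → ¬ Nb (Set.range seqA) B := by
  classical
  intro B hBA hBfin hcard hNb
  obtain ⟨-, hno⟩ := hNb
  apply hno
  -- index function
  set f : (Fin 3 → ℝ) → ℕ := fun b => if h : ∃ n, seqA n = b then h.choose else 0 with hf
  have hfb : ∀ b ∈ B, seqA (f b) = b := by
    intro b hb
    obtain ⟨n, hn⟩ := hBA hb
    have h : ∃ n, seqA n = b := ⟨n, hn⟩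
    simp only [hf, dif_pos h]
    exact h.choose_spec
  set s : Finset (Fin 3 → ℝ) := hBfin.toFinset with hs
  have hsB : ∀ b, b ∈ s ↔ b ∈ B := by intro b; simp [hs]
  have hscard : s.card = 4 := by
    rw [← hcard]; exact (Set.ncard_eq_toFinset_card B hBfin).symm
  set T : Finset ℕ := s.image f with hT
  have hTmem : ∀ n ∈ T, seqA n ∈ B := by
    intro n hn
    obtain ⟨b, hb, rfl⟩ := Finset.mem_image.mp hn
    rw [hfb b ((hsB b).mp hb)]; exact (hsB b).mp hb
  have hTcard : T.card = 4 := by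
    rw [hT, Finset.card_image_of_injOn, hscard]
    intro a ha b hb hab
    have := hfb a ((hsB a).mp ha)
    rw [hab, hfb b ((hsB b).mp hb)] at this
    exact this.symm
  set T1 : Finset ℕ := T.erase 0 with hT1
  have hT1card : 3 ≤ T1.card := by
    have : T.card - 1 ≤ T1.card := by
      rw [hT1]; exact Finset.pred_card_le_card_erase
    omega
  have hT1ne : T1.Nonempty := Finset.card_pos.mp (by omega)
  set n4 : ℕ := T1.max' hT1ne with hn4
  have hn4T1 : n4 ∈ T1 := T1.max'_mem hT1ne
  set T2 : Finset ℕ := T1.erase n4 with hT2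
  have hT2card : 2 ≤ T2.card := by
    have : T1.card - 1 ≤ T2.card := by
      rw [hT2]; exact Finset.pred_card_le_card_erase
    omega
  have hT2ne : T2.Nonempty := Finset.card_pos.mp (by omega)
  set n3 : ℕ := T2.max' hT2ne with hn3
  have hn3T2 : n3 ∈ T2 := T2.max'_mem hT2ne
  set T3 : Finset ℕ := T2.erase n3 with hT3
  have hT3card : 1 ≤ T3.card := by
    have : T2.card - 1 ≤ T3.card := by
      rw [hT3]; exact Finset.pred_card_le_card_erase
    omega
  have hT3ne : T3.Nonempty := Finset.card_pos.mp (by omega)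
  set n2 : ℕ := T3.max' hT3ne with hn2
  have hn2T3 : n2 ∈ T3 := T3.max'_mem hT3ne
  -- basic facts
  have hn3T1 : n3 ∈ T1 := Finset.mem_of_mem_erase hn3T2
  have hn2T2 : n2 ∈ T2 := Finset.mem_of_mem_erase hn2T3
  have hn2T1 : n2 ∈ T1 := Finset.mem_of_mem_erase hn2T2
  have h34 : n3 < n4 :=
    lt_of_le_of_ne (T1.le_max' n3 hn3T1) (Finset.ne_of_mem_erase hn3T2)
  have h23 : n2 < n3 :=
    lt_of_le_of_ne (T2.le_max' n2 hn2T2) (Finset.ne_of_mem_erase hn2T3)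
  have h2pos : 1 ≤ n2 := Nat.one_le_iff_ne_zero.mpr (Finset.ne_of_mem_erase hn2T1)
  have hb2 : seqA n2 ∈ B := hTmem n2 (Finset.mem_of_mem_erase hn2T1)
  have hb3 : seqA n3 ∈ B := hTmem n3 (Finset.mem_of_mem_erase hn3T1)
  have hb4 : seqA n4 ∈ B := hTmem n4 (Finset.mem_of_mem_erase hn4T1)
  have h2ne : n2 ≠ 0 := by omega
  have h3ne : n3 ≠ 0 := by omega
  have h4ne : n4 ≠ 0 := by omega
  refine ⟨seqA n3, Set.mem_range_self n3, ?_⟩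
  have h2r : (0:ℝ) < (n2:ℝ) := by exact_mod_cast h2pos
  have h3r : (0:ℝ) < (n3:ℝ) := by exact_mod_cast Nat.pos_of_ne_zero h3ne
  have h4r : (0:ℝ) < (n4:ℝ) := by exact_mod_cast Nat.pos_of_ne_zero h4ne
  intro i
  rw [seqA_ne n3 h3ne]
  fin_cases i
  · refine lt_of_lt_of_le ?_ (le_vsup hb4 0)
    rw [seqA_ne n4 h4ne]
    show ((![(n3:ℝ), 1/(n3:ℝ), ((n3:ℝ)-1)/(n3:ℝ)] 0 : ℝ) : EReal) < _
    simp only [Matrix.cons_val_zero]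
    exact EReal.coe_lt_coe_iff.mpr (by exact_mod_cast h34)
  · refine lt_of_lt_of_le ?_ (le_vsup hb2 1)
    rw [seqA_ne n2 h2ne]
    show ((![(n3:ℝ), 1/(n3:ℝ), ((n3:ℝ)-1)/(n3:ℝ)] 1 : ℝ) : EReal) <
      ((![(n2:ℝ), 1/(n2:ℝ), ((n2:ℝ)-1)/(n2:ℝ)] 1 : ℝ) : EReal)
    simp only [Matrix.cons_val_one, Matrix.head_cons]
    exact EReal.coe_lt_coe_iff.mpr
      (one_div_lt_one_div_of_lt h2r (by exact_mod_cast h23))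
  · refine lt_of_lt_of_le ?_ (le_vsup hb4 2)
    rw [seqA_ne n4 h4ne]
    show ((![(n3:ℝ), 1/(n3:ℝ), ((n3:ℝ)-1)/(n3:ℝ)] 2 : ℝ) : EReal) <
      ((![(n4:ℝ), 1/(n4:ℝ), ((n4:ℝ)-1)/(n4:ℝ)] 2 : ℝ) : EReal)
    simp only [Matrix.cons_val_two, Matrix.tail_cons, Matrix.head_cons]
    have h34r : (n3:ℝ) < (n4:ℝ) := by exact_mod_cast h34
    refine EReal.coe_lt_coe_iff.mpr ?_
    rw [div_lt_div_iff₀ h3r h4r]; nlinarith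
end

section
/- Let a₀ = (0,0,1) and a_i = (i, 1/i, (i−1)/i) for i ≥ 1, and A = {a₀, a₁, …} ⊆ ℝ³. Then for every i ≥ 1, the set {a₀, a_i, a_{i+1}} belongs to Nb(A). -/
lemma vsup_triple {n : ℕ} (x y z : Fin n → ℝ) (k : Fin n) :
    vsup {x, y, z} k = ((x k : ℝ) : EReal) ⊔ ((y k : ℝ) : EReal) ⊔ ((z k : ℝ) : EReal) := by
  rw [show ({x,y,z} : Set (Fin n → ℝ)) = insert x (insert y {z}) from rfl]
  simp only [vsup, iSup_insert, iSup_singleton, sup_assoc]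

lemma ereal_lt_sup3 {a b c d : ℝ} :
    ((a:EReal) < ((b:ℝ):EReal) ⊔ ((c:ℝ):EReal) ⊔ ((d:ℝ):EReal)) ↔ (a < b ∨ a < c ∨ a < d) := by
  rw [lt_sup_iff, lt_sup_iff]
  simp [EReal.coe_lt_coe_iff, or_assoc]

theorem stmt_12 :
    ∀ i : ℕ, 1 ≤ i → Nb (Set.range seqA) {seqA 0, seqA i, seqA (i + 1)} := by
  intro i hi
  constructor
  · rintro b (rfl | rfl | rfl) <;> exact Set.mem_range_self _
  · rintro ⟨a, ⟨j, rfl⟩, h⟩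
    have hi0 : i ≠ 0 := by omega
    have hi1 : i + 1 ≠ 0 := by omega
    have hipos : (0:ℝ) < i := by exact_mod_cast Nat.pos_of_ne_zero hi0
    rcases Nat.eq_zero_or_pos j with rfl | hj
    · have h2 := h 2
      rw [vsup_triple, ereal_lt_sup3] at h2
      norm_num [seqA, hi0, hi1] at h2
      simp only [Matrix.cons_val] at h2
      have hb1 : ((i:ℝ) - 1) / i < 1 := by rw [div_lt_one hipos]; linarith
      have hb2 : (i:ℝ) / ((i:ℝ) + 1) < 1 := by rw [div_lt_one (by linarith)]; linarith
      rcases h2 with h2 | h2 <;> linarith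
    · have hjpos : (0:ℝ) < j := by exact_mod_cast hj
      have hj0 : j ≠ 0 := by omega
      have h0 := h 0
      have h1 := h 1
      rw [vsup_triple, ereal_lt_sup3] at h0 h1
      norm_num [seqA, hi0, hi1, hj0] at h0 h1
      simp only [← one_div] at h1
      have hji : (j:ℝ) ≤ i := by
        rcases h0 with h0 | h0 | h0
        · linarith
        · exact_mod_cast h0.le
        · have : j < i + 1 := by exact_mod_cast h0
          exact_mod_cast Nat.lt_succ_iff.mp this
      rcases h1 with h1 | h1 | h1
      · linarith
      · have := lt_of_one_div_lt_one_div hjpos h1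
        linarith
      · have := lt_of_one_div_lt_one_div hjpos h1
        linarith
end

section
/- Let A ⊆ ℝ^n and suppose a, a' ∈ A are A-neighbors with a_i ≠ a'_i for every coordinate i. If B ∈ Nb(A) contains both a and a', then for each coordinate i, at most one of a, a' attains the maximum (∨B)_i. Consequently, in a generic set A (all pairs of neighbors differ in every coordinate and at most one point of A ∩ {x ≤ ∨B} attains each coordinate of ∨B), every simplex B ∈ Nb(A) satisfies card B ≤ n. -/
theorem stmt_14 (n : ℕ) (A : Set (Fin n → ℝ)) :
    (∀ a ∈ A, ∀ a' ∈ A, Nb A {a, a'} → (∀ i, a i ≠ a' i) →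
      ∀ B, Nb A B → a ∈ B → a' ∈ B →
        ∀ i, ¬ (((a i : ℝ) : EReal) = vsup B i ∧ ((a' i : ℝ) : EReal) = vsup B i)) ∧
    ((∀ a ∈ A, ∀ a' ∈ A, a ≠ a' → Nb A {a, a'} → ∀ i, a i ≠ a' i) →
     (∀ B, Nb A B → ∀ i,
        Set.Subsingleton
          {a ∈ A | (∀ j, ((a j : ℝ) : EReal) ≤ vsup B j) ∧ ((a i : ℝ) : EReal) = vsup B i}) →
     ∀ B, Nb A B → B.Finite ∧ B.ncard ≤ n) := by
  constructor
  · rintro a _ a' _ _ hne B _ _ _ i ⟨h1, h2⟩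
    exact hne i (by exact_mod_cast h1.trans h2.symm)
  · intro _ hsub B hB
    have hle : ∀ b ∈ B, ∀ j, ((b j : ℝ) : EReal) ≤ vsup B j := by
      intro b hb j
      exact le_iSup₂ (f := fun b (_ : b ∈ B) => ((b j : ℝ) : EReal)) b hb
    have hattain : ∀ b ∈ B, ∃ i, ((b i : ℝ) : EReal) = vsup B i := by
      intro b hb
      have : ¬ ∀ i, ((b i : ℝ) : EReal) < vsup B i := fun h => hB.2 ⟨b, hB.1 hb, h⟩
      push_neg at this
      obtain ⟨i, hi⟩ := this
      exact ⟨i, le_antisymm (hle b hb i) hi⟩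
    choose f hf using hattain
    have hinj : Function.Injective (fun b : B => f b b.2) := by
      rintro ⟨b, hb⟩ ⟨b', hb'⟩ h
      simp only at h
      have hmem : b ∈ {a ∈ A | (∀ j, ((a j : ℝ) : EReal) ≤ vsup B j) ∧
          ((a (f b' hb') : ℝ) : EReal) = vsup B (f b' hb')} :=
        ⟨hB.1 hb, hle b hb, h ▸ hf b hb⟩
      have hmem' : b' ∈ {a ∈ A | (∀ j, ((a j : ℝ) : EReal) ≤ vsup B j) ∧
          ((a (f b' hb') : ℝ) : EReal) = vsup B (f b' hb')} :=
        ⟨hB.1 hb', hle b' hb', hf b' hb'⟩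
      exact Subtype.ext (hsub B hB (f b' hb') hmem hmem')
    have hfin : B.Finite := Set.finite_coe_iff.mp (Finite.of_injective _ hinj)
    refine ⟨hfin, ?_⟩
    have := Nat.card_le_card_of_injective _ hinj
    simpa [Nat.card_coe_set_eq] using this
end

section
/- If A ⊆ ℤ^n is generic (for all A-neighbors a, a', a_i ≠ a'_i for all i), then Nb(A) is locally finite: every element of A has finitely many A-neighbors. -/
lemma lt_vsup_pair {n : ℕ} (x y z : Fin n → ℝ) (i : Fin n) :
    ((z i : ℝ) : EReal) < vsup {x, y} i ↔ z i < max (x i) (y i) := by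
  have h : vsup {x, y} i = ((max (x i) (y i) : ℝ) : EReal) := by
    simp only [vsup, iSup_pair]
    rcases le_total (x i) (y i) with h | h
    · rw [max_eq_right h, max_eq_right (EReal.coe_le_coe_iff.2 h)]
    · rw [max_eq_left h, max_eq_left (EReal.coe_le_coe_iff.2 h)]
  rw [h, EReal.coe_lt_coe_iff]

theorem stmt_15 (n : ℕ) (A : Set (Fin n → ℝ))
    (hint : ∀ a ∈ A, ∀ i, ∃ m : ℤ, a i = (m : ℝ))
    (hgen : ∀ a ∈ A, ∀ a' ∈ A, a ≠ a' → Nb A {a, a'} → ∀ i, a i ≠ a' i) :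
    ∀ a ∈ A, {b ∈ A | Nb A {a, b}}.Finite := by
  -- every element of A has integer coordinates, expressed via floors
  have hfl : ∀ x ∈ A, ∀ i, ((⌊x i⌋ : ℤ) : ℝ) = x i := by
    intro x hx i
    obtain ⟨m, hm⟩ := hint x hx i
    rw [hm, Int.floor_intCast]
  intro a ha
  by_contra hfin
  rw [← Set.not_infinite, not_not] at hfin
  have hN' : ({b ∈ A | Nb A {a, b}} \ {a}).Infinite :=
    hfin.diff (Set.finite_singleton a)
  haveI := hN'.to_subtype
  -- pigeonhole on the sign pattern
  obtain ⟨S, hS⟩ := Finite.exists_infinite_fiber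
    (fun b : ↥({b ∈ A | Nb A {a, b}} \ {a}) => (fun i => decide (a i < (b : Fin n → ℝ) i)))
  haveI : Infinite ↥((fun b : ↥({b ∈ A | Nb A {a, b}} \ {a}) =>
      (fun i => decide (a i < (b : Fin n → ℝ) i))) ⁻¹' {S}) := hS
  set N := ({b ∈ A | Nb A {a, b}} \ {a}) with hNdef
  obtain f0 := Infinite.natEmbedding
    ((fun b : ↥N => (fun i => decide (a i < (b : Fin n → ℝ) i))) ⁻¹' {S})
  -- the sequence of neighbors with fixed pattern S
  set f : ℕ → (Fin n → ℝ) := fun k => ((f0 k : ↥N) : Fin n → ℝ) with hfdef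
  have hfinj : Function.Injective f := by
    intro k l h
    exact f0.injective (Subtype.ext (Subtype.ext h))
  have hfA : ∀ k, f k ∈ A := fun k => ((f0 k : ↥N).2.1).1
  have hfNb : ∀ k, Nb A {a, f k} := fun k => ((f0 k : ↥N).2.1).2
  have hfne : ∀ k, f k ≠ a := fun k => (f0 k : ↥N).2.2
  have hfS : ∀ k i, S i = true ↔ a i < f k i := by
    intro k i
    have := (f0 k).2
    simp only [Set.mem_preimage, Set.mem_singleton_iff] at this
    rw [← this]
    simp
    exact Iff.rfl
  -- coordinates differ everywhere from a, by genericity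
  have hfstrict : ∀ k i, S i = false → f k i < a i := by
    intro k i hSi
    have h1 : ¬ a i < f k i := by
      intro h
      rw [← hfS k i] at h
      simp [hSi] at h
    have h2 : a i ≠ f k i := hgen a ha (f k) (hfA k) (fun h => hfne k h.symm) (hfNb k) i
    exact lt_of_le_of_ne (not_lt.1 h1) (fun h => h2 h.symm)
  -- integer comparison helpers
  have hfloorS : ∀ k i, S i = true → ⌊a i⌋ < ⌊f k i⌋ := by
    intro k i hSi
    have := (hfS k i).1 hSi
    rw [← hfl a ha i, ← hfl (f k) (hfA k) i] at this
    exact_mod_cast this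
  have hfloorSc : ∀ k i, S i = false → ⌊f k i⌋ < ⌊a i⌋ := by
    intro k i hSi
    have := hfstrict k i hSi
    rw [← hfl a ha i, ← hfl (f k) (hfA k) i] at this
    exact_mod_cast this
  -- Dickson's lemma
  set φ : (Fin n → ℝ) → (Fin n → ℕ) := fun b i =>
    if S i = true then (⌊b i⌋ - ⌊a i⌋).toNat else (⌊a i⌋ - ⌊b i⌋).toNat with hφdef
  have hpwo : (Set.univ : Set (Fin n → ℕ)).IsPWO :=
    Set.isPWO_of_wellQuasiOrderedLE Set.univ
  obtain ⟨m, l, hml, hle⟩ := (Set.partiallyWellOrderedOn_iff_exists_lt.1 hpwo) (φ ∘ f) (fun k => Set.mem_univ _)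
  have hbne : f m ≠ f l := fun h => by have := hfinj h; omega
  -- f m ≤ f l on S, f l ≤ f m off S (as reals)
  have hleS : ∀ i, S i = true → f m i ≤ f l i := by
    intro i hSi
    have h := hle i
    simp only [hφdef, Function.comp_apply, hSi, if_pos] at h
    have h1 : (0:ℤ) ≤ ⌊f m i⌋ - ⌊a i⌋ := by have := hfloorS m i hSi; omega
    have h2 : (0:ℤ) ≤ ⌊f l i⌋ - ⌊a i⌋ := by have := hfloorS l i hSi; omega
    have h3 : ⌊f m i⌋ - ⌊a i⌋ ≤ ⌊f l i⌋ - ⌊a i⌋ := by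
      rw [← Int.toNat_of_nonneg h1, ← Int.toNat_of_nonneg h2]
      exact_mod_cast h
    have h4 : ⌊f m i⌋ ≤ ⌊f l i⌋ := by omega
    rw [← hfl (f m) (hfA m) i, ← hfl (f l) (hfA l) i]
    exact_mod_cast h4
  have hleSc : ∀ i, S i = false → f l i ≤ f m i := by
    intro i hSi
    have h := hle i
    simp only [hφdef, Function.comp_apply, hSi, Bool.false_eq_true, if_false] at h
    have h1 : (0:ℤ) ≤ ⌊a i⌋ - ⌊f m i⌋ := by have := hfloorSc m i hSi; omega
    have h2 : (0:ℤ) ≤ ⌊a i⌋ - ⌊f l i⌋ := by have := hfloorSc l i hSi; omega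
    have h3 : ⌊a i⌋ - ⌊f m i⌋ ≤ ⌊a i⌋ - ⌊f l i⌋ := by
      rw [← Int.toNat_of_nonneg h1, ← Int.toNat_of_nonneg h2]
      exact_mod_cast h
    have h4 : ⌊f l i⌋ ≤ ⌊f m i⌋ := by omega
    rw [← hfl (f m) (hfA m) i, ← hfl (f l) (hfA l) i]
    exact_mod_cast h4
  -- the face Nb A {a, f l} will be contradicted
  have hNb' := (hfNb l).2
  by_cases hc : ∀ i, S i = true → f m i < f l i
  · -- f m is strictly below max(a, f l)
    apply hNb'
    refine ⟨f m, hfA m, fun i => ?_⟩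
    rw [lt_vsup_pair]
    cases hSi : S i with
    | true => exact lt_of_lt_of_le (hc i hSi) (le_max_right _ _)
    | false => exact lt_of_lt_of_le (hfstrict m i hSi) (le_max_left _ _)
  · -- some coordinate in S is shared, so {f m, f l} is not a face
    push_neg at hc
    obtain ⟨i0, hSi0, hnlt⟩ := hc
    have heq : f m i0 = f l i0 := le_antisymm (hleS i0 hSi0) hnlt
    have hnface : ¬ Nb A {f m, f l} := fun h => hgen (f m) (hfA m) (f l) (hfA l) hbne h i0 heq
    have hsub : ({f m, f l} : Set (Fin n → ℝ)) ⊆ A := by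
      intro x hx
      rcases hx with h | h
      · rw [h]; exact hfA m
      · rw [h]; exact hfA l
    rw [Nb, not_and, not_not] at hnface
    obtain ⟨z, hzA, hz⟩ := hnface hsub
    apply hNb'
    refine ⟨z, hzA, fun i => ?_⟩
    have hzi := (lt_vsup_pair (f m) (f l) z i).1 (hz i)
    rw [lt_vsup_pair]
    cases hSi : S i with
    | true =>
      rw [max_eq_right (hleS i hSi)] at hzi
      exact lt_of_lt_of_le hzi (le_max_right _ _)
    | false =>
      have h1 : f m i < a i := hfstrict m i hSi
      have h2 : f l i < a i := hfstrict l i hSi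
      calc z i < max (f m i) (f l i) := hzi
        _ ≤ a i := max_le h1.le h2.le
        _ ≤ max (a i) (f l i) := le_max_left _ _
end

section
/- Let A ⊆ ℝ^n, a ∈ A, B ∈ Nb(A), and suppose the coordinatewise supremum satisfies a ≤ ∨B. Then B ∪ {a} ∈ Nb(A). In particular, if dim Nb(A) = d, then for each B ∈ Nb(A), A ∩ {x : x ≤ ∨B} has at most d+1 elements. -/
theorem stmt_18 (n d : ℕ) (A : Set (Fin n → ℝ)) :
    (∀ a ∈ A, ∀ B, Nb A B → (∀ i, ((a i : ℝ) : EReal) ≤ vsup B i) →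
      Nb A (B ∪ {a})) ∧
    (((∀ B, Nb A B → B.Finite ∧ B.ncard ≤ d + 1) ∧
      (∃ B, Nb A B ∧ B.Finite ∧ B.ncard = d + 1)) →
     ∀ B, Nb A B →
       ({a ∈ A | ∀ i, ((a i : ℝ) : EReal) ≤ vsup B i}).Finite ∧
       ({a ∈ A | ∀ i, ((a i : ℝ) : EReal) ≤ vsup B i}).ncard ≤ d + 1) := by
  constructor
  · intro a ha B hB hle
    refine ⟨Set.union_subset hB.1 (Set.singleton_subset_iff.mpr ha), ?_⟩
    rintro ⟨a', ha', hlt⟩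
    refine hB.2 ⟨a', ha', fun i => lt_of_lt_of_le (hlt i) ?_⟩
    apply iSup₂_le
    rintro b (hb | rfl)
    · exact le_biSup (fun b => ((b i : ℝ) : EReal)) hb
    · exact hle i
  · rintro ⟨h1, -⟩ B hB
    refine h1 _ ⟨fun a ha => ha.1, ?_⟩
    rintro ⟨a', ha', hlt⟩
    refine hB.2 ⟨a', ha', fun i => lt_of_lt_of_le (hlt i) ?_⟩
    exact iSup₂_le fun b hb => hb.2 i
end
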